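/- Suppose f is absolutely continuous on [0,1], f ∈ L^2[0,1], and f' = l₁ + l₂ with l₁ ∈ L^1[0,1] and l₂ ∈ L^2[0,1]. Set δ = ‖f‖_{L^2[0,1]}, ε = ‖l₁‖_{L^1[0,1]}, τ = ‖l₂‖_{L^2[0,1]}. Then ‖f‖_{L^∞[0,1]} ≤ √(δ² + 2(δτ + ε(τ + ε + δ))). -/

import Mathlib

open MeasureTheory intervalIntegral

private lemma holder2 {X : Type*} [MeasurableSpace X] (u v : X → ℂ) (μ : Measure X)
    (hu : AEStronglyMeasurable u μ) (hv : AEStronglyMeasurable v μ)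
    (hu2 : Integrable (fun t => ‖u t‖ ^ 2) μ) (hv2 : Integrable (fun t => ‖v t‖ ^ 2) μ) :
    ∫ t, ‖u t‖ * ‖v t‖ ∂μ
      ≤ Real.sqrt (∫ t, ‖u t‖ ^ 2 ∂μ) * Real.sqrt (∫ t, ‖v t‖ ^ 2 ∂μ) := by
  have h2 : (ENNReal.ofReal (2 : ℝ)) = 2 := by
    simp [ENNReal.ofReal_ofNat]
  have hu' : MemLp u (ENNReal.ofReal (2 : ℝ)) μ := by
    rw [h2]; exact (memLp_two_iff_integrable_sq_norm hu).2 hu2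
  have hv' : MemLp v (ENNReal.ofReal (2 : ℝ)) μ := by
    rw [h2]; exact (memLp_two_iff_integrable_sq_norm hv).2 hv2
  have hpq : Real.HolderConjugate 2 2 := Real.holderConjugate_iff.mpr ⟨one_lt_two, by norm_num⟩
  have := integral_mul_norm_le_Lp_mul_Lq hpq hu' hv'
  have hrw : ∀ w : X → ℂ, (∫ t, ‖w t‖ ^ (2 : ℝ) ∂μ) ^ ((1 : ℝ) / 2)
      = Real.sqrt (∫ t, ‖w t‖ ^ 2 ∂μ) := by
    intro w
    rw [Real.sqrt_eq_rpow]
    congr 1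
    refine integral_congr_ae (Filter.Eventually.of_forall fun t => ?_)
    norm_num
  rwa [hrw u, hrw v] at this

private lemma key_identity (g F : ℝ → ℂ) {y x : ℝ} (hyx : y ≤ x)
    (hg : IntegrableOn g (Set.Ioc y x) volume)
    (hF : ∀ t ∈ Set.Icc y x, F t = F y + ∫ s in y..t, g s) :
    Complex.normSq (F x) = Complex.normSq (F y)
      + 2 * (∫ t in Set.Ioc y x, (starRingEnd ℂ) (F t) * g t).re := by
  set S : Set ℝ := Set.Ioc y x with hS
  have hmS : MeasurableSet S := measurableSet_Ioc
  set G : ℂ := ∫ s in S, g s with hG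
  have hconjg : Integrable (fun s => (starRingEnd ℂ) (g s)) (volume.restrict S) := by
    refine hg.norm.mono' ?_ (Filter.Eventually.of_forall fun s => by simp)
    simp only [starRingEnd_apply]
    exact continuous_star.comp_aestronglyMeasurable hg.aestronglyMeasurable
  set Φ : ℝ × ℝ → ℂ :=
    Set.indicator {p : ℝ × ℝ | p.2 ≤ p.1} (fun p => (starRingEnd ℂ) (g p.2) * g p.1) with hΦ
  set Ψ : ℝ × ℝ → ℂ :=
    Set.indicator {p : ℝ × ℝ | p.2 ≤ p.1} (fun p => g p.2 * (starRingEnd ℂ) (g p.1)) with hΨ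
  have hmle : MeasurableSet {p : ℝ × ℝ | p.2 ≤ p.1} :=
    measurableSet_le measurable_snd measurable_fst
  have hΦint : Integrable Φ ((volume.restrict S).prod (volume.restrict S)) := by
    refine Integrable.indicator ?_ hmle
    simpa [mul_comm] using Integrable.mul_prod hg hconjg
  have hΨint : Integrable Ψ ((volume.restrict S).prod (volume.restrict S)) := by
    refine Integrable.indicator ?_ hmle
    simpa [mul_comm] using Integrable.mul_prod hconjg hg
  have hΦmarg : Integrable (fun t => ∫ s in S, Φ (t, s)) (volume.restrict S) :=
    hΦint.integral_prod_left
  have hΨmarg : Integrable (fun t => ∫ s in S, Ψ (s, t)) (volume.restrict S) :=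
    hΨint.integral_prod_right
  -- step: rewrite the integrand
  have hstep : ∀ t ∈ S, (starRingEnd ℂ) (F t) * g t
      = (starRingEnd ℂ) (F y) * g t + ∫ s in S, Φ (t, s) := by
    intro t ht
    have htI : t ∈ Set.Icc y x := ⟨ht.1.le, ht.2⟩
    have h1 : F t = F y + ∫ s in Set.Ioc y t, g s := by
      rw [hF t htI, intervalIntegral.integral_of_le ht.1.le]
    have h2 : (∫ s in Set.Ioc y t, g s) = ∫ s in S, (Set.Iic t).indicator g s := by
      rw [setIntegral_indicator measurableSet_Iic, hS, Set.Ioc_inter_Iic, min_eq_right ht.2]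
    have h3 : (∫ s in S, Φ (t, s))
        = (starRingEnd ℂ) (∫ s in Set.Ioc y t, g s) * g t := by
      rw [h2, ← integral_conj, ← MeasureTheory.integral_mul_const]
      refine setIntegral_congr_fun hmS fun s hs => ?_
      by_cases h : s ≤ t <;>
        simp [hΦ, Set.indicator_apply, Set.mem_Iic, h]
    rw [h1, map_add, add_mul, h3]
  have hsplit : (∫ t in S, (starRingEnd ℂ) (F t) * g t)
      = (starRingEnd ℂ) (F y) * G + ∫ t in S, ∫ s in S, Φ (t, s) := by
    rw [setIntegral_congr_fun hmS hstep, integral_add (hg.const_mul _) hΦmarg,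
      MeasureTheory.integral_const_mul]
  -- the symmetrization identity
  have hkey : ∀ t : ℝ, (∫ s in S, (Φ (t, s) + Ψ (s, t))) = (starRingEnd ℂ) G * g t := by
    intro t
    have hae : ∀ᵐ s ∂(volume.restrict S), s ≠ t := by
      refine ae_iff.mpr ?_
      have h0 : {s : ℝ | ¬ s ≠ t} = {t} := by ext u; simp
      rw [h0, Measure.restrict_apply (MeasurableSet.singleton t)]
      exact measure_mono_null Set.inter_subset_left (measure_singleton t)
    have h1 : (∫ s in S, (Φ (t, s) + Ψ (s, t)))
        = ∫ s in S, (starRingEnd ℂ) (g s) * g t := by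
      refine integral_congr_ae ?_
      filter_upwards [hae] with s hs
      rcases hs.lt_or_gt with h | h
      · simp [hΦ, hΨ, Set.indicator_apply, h.le, not_le.mpr h]
      · simp [hΦ, hΨ, Set.indicator_apply, not_le.mpr h, h.le, mul_comm]
    rw [h1, MeasureTheory.integral_mul_const, integral_conj]
  have hBconj : (starRingEnd ℂ) (∫ t in S, ∫ s in S, Φ (t, s))
      = ∫ t in S, ∫ s in S, Ψ (s, t) := by
    have hcΦ : ∀ p : ℝ × ℝ, (starRingEnd ℂ) (Φ p) = Ψ p := by
      intro p
      by_cases h : p.2 ≤ p.1 <;> simp [hΦ, hΨ, Set.indicator_apply, h, mul_comm]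
    calc (starRingEnd ℂ) (∫ t in S, ∫ s in S, Φ (t, s))
        = ∫ t in S, (starRingEnd ℂ) (∫ s in S, Φ (t, s)) := (integral_conj).symm
      _ = ∫ t in S, ∫ s in S, (starRingEnd ℂ) (Φ (t, s)) := by
          refine integral_congr_ae (Filter.Eventually.of_forall fun t => ?_)
          exact (integral_conj).symm
      _ = ∫ t in S, ∫ s in S, Ψ (t, s) := by simp_rw [hcΦ]
      _ = ∫ s in S, ∫ t in S, Ψ (t, s) := integral_integral_swap hΨint
  have hBsum : (∫ t in S, ∫ s in S, Φ (t, s)) + (∫ t in S, ∫ s in S, Ψ (s, t))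
      = (starRingEnd ℂ) G * G := by
    rw [← integral_add hΦmarg hΨmarg]
    have h2 : (∫ t in S, ((∫ s in S, Φ (t, s)) + ∫ s in S, Ψ (s, t)))
        = ∫ t in S, (starRingEnd ℂ) G * g t := by
      refine integral_congr_ae ?_
      filter_upwards [hΦint.prod_right_ae, hΨint.prod_left_ae] with t h1 h2
      rw [← integral_add h1 h2, hkey t]
    rw [h2, MeasureTheory.integral_const_mul]
  -- assemble
  have hFx : F x = F y + G := by
    rw [hF x ⟨hyx, le_refl x⟩, intervalIntegral.integral_of_le hyx]
  have h2re : 2 * (∫ t in S, ∫ s in S, Φ (t, s)).re = Complex.normSq G := by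
    have hsum2 : (∫ t in S, ∫ s in S, Φ (t, s))
        + (starRingEnd ℂ) (∫ t in S, ∫ s in S, Φ (t, s)) = (starRingEnd ℂ) G * G := by
      rw [hBconj]; exact hBsum
    have hGG : ((starRingEnd ℂ) G * G).re = Complex.normSq G := by
      rw [mul_comm, Complex.mul_conj]; simp
    have := congrArg Complex.re hsum2
    simp only [Complex.add_re, Complex.conj_re] at this
    linarith
  rw [hFx, Complex.normSq_add, hsplit]
  simp only [Complex.add_re]
  have hre : ((starRingEnd ℂ) (F y) * G).re = (F y * (starRingEnd ℂ) G).re := by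
    have h : (starRingEnd ℂ) (F y * (starRingEnd ℂ) G) = (starRingEnd ℂ) (F y) * G := by
      rw [map_mul, Complex.conj_conj]
    rw [← h, Complex.conj_re]
  linarith


/-- Suppose `f` is absolutely continuous on `[0,1]` (expressed via the integral
identity `f x = f 0 + ∫₀ˣ (l₁ + l₂)`), `f ∈ L²[0,1]`, `l₁ ∈ L¹[0,1]`, `l₂ ∈ L²[0,1]`.
With `δ = ‖f‖_{L²[0,1]}`, `ε = ‖l₁‖_{L¹[0,1]}`, `τ = ‖l₂‖_{L²[0,1]}`, we have
`‖f‖_{L^∞[0,1]} ≤ √(δ² + 2(δτ + ε(τ + ε + δ)))` (stated pointwise, `f` being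
continuous). -/
theorem stmt_4 (f l₁ l₂ : ℝ → ℂ)
    (hl₁ : IntegrableOn l₁ (Set.Icc (0 : ℝ) 1) volume)
    (hl₂ : IntegrableOn l₂ (Set.Icc (0 : ℝ) 1) volume)
    (hl₂sq : IntegrableOn (fun x => ‖l₂ x‖ ^ 2) (Set.Icc (0 : ℝ) 1) volume)
    (hfsq : IntegrableOn (fun x => ‖f x‖ ^ 2) (Set.Icc (0 : ℝ) 1) volume)
    (hAC : ∀ x ∈ Set.Icc (0 : ℝ) 1, f x = f 0 + ∫ t in (0 : ℝ)..x, (l₁ t + l₂ t))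
    (δ ε τ : ℝ)
    (hδ : δ = Real.sqrt (∫ x in Set.Icc (0 : ℝ) 1, ‖f x‖ ^ 2))
    (hε : ε = ∫ x in Set.Icc (0 : ℝ) 1, ‖l₁ x‖)
    (hτ : τ = Real.sqrt (∫ x in Set.Icc (0 : ℝ) 1, ‖l₂ x‖ ^ 2)) :
    ∀ x ∈ Set.Icc (0 : ℝ) 1,
      ‖f x‖ ≤ Real.sqrt (δ ^ 2 + 2 * (δ * τ + ε * (τ + ε + δ))) := by
  intro x hx
  have h01 : (0 : ℝ) ∈ Set.Icc (0 : ℝ) 1 := by norm_num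
  set g : ℝ → ℂ := fun t => l₁ t + l₂ t with hgdef
  have hg : IntegrableOn g (Set.Icc (0 : ℝ) 1) volume := hl₁.add hl₂
  have hsub : ∀ {a b : ℝ}, a ∈ Set.Icc (0 : ℝ) 1 → b ∈ Set.Icc (0 : ℝ) 1 →
      Set.uIoc a b ⊆ Set.Icc (0 : ℝ) 1 := by
    intro a b ha hb
    exact Set.Ioc_subset_Icc_self.trans
      (Set.Icc_subset_Icc (le_min ha.1 hb.1) (max_le ha.2 hb.2))
  have hii : ∀ {a b : ℝ}, a ∈ Set.Icc (0 : ℝ) 1 → b ∈ Set.Icc (0 : ℝ) 1 →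
      IntervalIntegrable g volume a b :=
    fun ha hb => intervalIntegrable_iff.mpr (hg.mono_set (hsub ha hb))
  have hfy : ∀ y ∈ Set.Icc (0 : ℝ) 1, ∀ t ∈ Set.Icc (0 : ℝ) 1,
      f t = f y + ∫ s in y..t, g s := by
    intro y hy t ht
    have h := intervalIntegral.integral_add_adjacent_intervals (hii h01 hy) (hii hy ht)
    rw [hAC t ht, hAC y hy, add_assoc, h]
  have hvol : volume (Set.Icc (0 : ℝ) 1) = 1 := by simp
  have hfc : ContinuousOn f (Set.Icc (0 : ℝ) 1) := by
    have hgIcc : IntegrableOn g (Set.uIcc (0 : ℝ) 1) volume := by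
      rwa [Set.uIcc_of_le zero_le_one]
    have hc : ContinuousOn (fun t => f 0 + ∫ s in (0 : ℝ)..t, g s) (Set.Icc (0 : ℝ) 1) := by
      have h2 := intervalIntegral.continuousOn_primitive_interval (a := 0) (b := 1)
        (μ := volume) hgIcc
      rw [Set.uIcc_of_le zero_le_one] at h2
      exact continuousOn_const.add h2
    exact hc.congr fun t ht => hAC t ht
  have hδ0 : 0 ≤ δ := hδ ▸ Real.sqrt_nonneg _
  have hτ0 : 0 ≤ τ := hτ ▸ Real.sqrt_nonneg _
  have hε0 : 0 ≤ ε := hε ▸ integral_nonneg fun t => norm_nonneg _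
  have hδsq : δ ^ 2 = ∫ t in Set.Icc (0 : ℝ) 1, ‖f t‖ ^ 2 := by
    rw [hδ]; exact Real.sq_sqrt (integral_nonneg fun t => sq_nonneg _)
  -- ∫ ‖l₂‖ ≤ τ
  have hone : Integrable (fun _ : ℝ => ‖(1 : ℂ)‖ ^ 2) (volume.restrict (Set.Icc (0 : ℝ) 1)) := by
    simp only [norm_one, one_pow]
    exact (integrableOn_const_iff).mpr (Or.inr (by rw [hvol]; exact ENNReal.one_lt_top))
  have hl₂norm : (∫ t in Set.Icc (0 : ℝ) 1, ‖l₂ t‖) ≤ τ := by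
    have h1 := holder2 (fun _ => (1 : ℂ)) l₂ (volume.restrict (Set.Icc (0 : ℝ) 1))
      aestronglyMeasurable_const hl₂.aestronglyMeasurable hone hl₂sq
    have h2 : (∫ t in Set.Icc (0 : ℝ) 1, ‖(1 : ℂ)‖ ^ 2) = 1 := by
      simp [hvol]
    rw [h2, Real.sqrt_one, one_mul] at h1
    rw [hτ]
    calc (∫ t in Set.Icc (0 : ℝ) 1, ‖l₂ t‖)
        = ∫ t in Set.Icc (0 : ℝ) 1, ‖(1 : ℂ)‖ * ‖l₂ t‖ := by simp
      _ ≤ _ := h1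
  -- there is a point with small value
  obtain ⟨y₀, hy₀, hy₀le⟩ : ∃ y ∈ Set.Icc (0 : ℝ) 1, ‖f y‖ ≤ δ := by
    by_contra hcon
    push_neg at hcon
    obtain ⟨z, hz, hzmin⟩ := isCompact_Icc.exists_isMinOn
      (Set.nonempty_Icc.mpr zero_le_one) hfc.norm
    have hz2 : δ < ‖f z‖ := hcon z hz
    have hmono : (∫ _ in Set.Icc (0 : ℝ) 1, ‖f z‖ ^ 2)
        ≤ ∫ t in Set.Icc (0 : ℝ) 1, ‖f t‖ ^ 2 := by
      refine setIntegral_mono_on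
        ((integrableOn_const_iff).mpr (Or.inr (by rw [hvol]; exact ENNReal.one_lt_top)))
        hfsq measurableSet_Icc fun t ht => ?_
      exact pow_le_pow_left₀ (norm_nonneg _) (hzmin ht) 2
    rw [setIntegral_const, measureReal_def, hvol] at hmono
    simp only [ENNReal.toReal_one, one_smul] at hmono
    nlinarith
  set M : ℝ := δ + ε + τ with hMdef
  have hM0 : 0 ≤ M := by positivity
  have hfM : ∀ z ∈ Set.Icc (0 : ℝ) 1, ‖f z‖ ≤ M := by
    intro z hz
    have h1 : f z = f y₀ + ∫ s in y₀..z, g s := hfy y₀ hy₀ z hz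
    have h2 : ‖∫ s in y₀..z, g s‖ ≤ ∫ s in Set.Icc (0 : ℝ) 1, ‖g s‖ := by
      refine intervalIntegral.norm_integral_le_integral_norm_uIoc.trans ?_
      exact setIntegral_mono_set hg.norm
        (Filter.Eventually.of_forall fun s => norm_nonneg _)
        ((hsub hy₀ hz).eventuallyLE)
    have h3 : (∫ s in Set.Icc (0 : ℝ) 1, ‖g s‖) ≤ ε + τ := by
      have h4 : (∫ s in Set.Icc (0 : ℝ) 1, ‖g s‖)
          ≤ ∫ s in Set.Icc (0 : ℝ) 1, (‖l₁ s‖ + ‖l₂ s‖) := by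
        refine setIntegral_mono_on hg.norm (hl₁.norm.add hl₂.norm) measurableSet_Icc
          fun s _ => norm_add_le _ _
      rw [integral_add hl₁.norm hl₂.norm] at h4
      have := hl₂norm
      rw [hε]
      linarith
    calc ‖f z‖ = ‖f y₀ + ∫ s in y₀..z, g s‖ := by rw [← h1]
      _ ≤ ‖f y₀‖ + ‖∫ s in y₀..z, g s‖ := norm_add_le _ _
      _ ≤ δ + (ε + τ) := add_le_add hy₀le (h2.trans h3)
      _ = M := by rw [hMdef]; ring
  -- main bound on the real part of the correction integral
  have hbound : ∀ a b : ℝ, a ∈ Set.Icc (0 : ℝ) 1 → b ∈ Set.Icc (0 : ℝ) 1 →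
      |(∫ t in Set.Ioc a b, (starRingEnd ℂ) (f t) * g t).re| ≤ M * ε + δ * τ := by
    intro a b ha hb
    have hsubI : Set.Ioc a b ⊆ Set.Icc (0 : ℝ) 1 :=
      Set.Ioc_subset_Icc_self.trans (Set.Icc_subset_Icc ha.1 hb.2)
    have hmIoc : MeasurableSet (Set.Ioc a b) := measurableSet_Ioc
    have hfcI : ContinuousOn f (Set.Ioc a b) := hfc.mono hsubI
    have hfmI : AEStronglyMeasurable (fun t => (starRingEnd ℂ) (f t))
        (volume.restrict (Set.Ioc a b)) := by
      simp only [starRingEnd_apply]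
      exact (continuous_star.comp_continuousOn hfcI).aestronglyMeasurable hmIoc
    have hbnd : ∀ᵐ t ∂(volume.restrict (Set.Ioc a b)), ‖(starRingEnd ℂ) (f t)‖ ≤ M := by
      filter_upwards [ae_restrict_mem hmIoc] with t ht
      simpa using hfM t (hsubI ht)
    have hint1 : Integrable (fun t => (starRingEnd ℂ) (f t) * l₁ t)
        (volume.restrict (Set.Ioc a b)) :=
      Integrable.bdd_mul (hl₁.mono_set hsubI) hfmI hbnd
    have hint2 : Integrable (fun t => (starRingEnd ℂ) (f t) * l₂ t)
        (volume.restrict (Set.Ioc a b)) :=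
      Integrable.bdd_mul (hl₂.mono_set hsubI) hfmI hbnd
    have hsplitI : (∫ t in Set.Ioc a b, (starRingEnd ℂ) (f t) * g t)
        = (∫ t in Set.Ioc a b, (starRingEnd ℂ) (f t) * l₁ t)
          + ∫ t in Set.Ioc a b, (starRingEnd ℂ) (f t) * l₂ t := by
      rw [← integral_add hint1 hint2]
      refine integral_congr_ae (Filter.Eventually.of_forall fun t => ?_)
      simp [hgdef, mul_add]
    have hp1 : ‖∫ t in Set.Ioc a b, (starRingEnd ℂ) (f t) * l₁ t‖ ≤ M * ε := by
      calc ‖∫ t in Set.Ioc a b, (starRingEnd ℂ) (f t) * l₁ t‖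
          ≤ ∫ t in Set.Ioc a b, ‖(starRingEnd ℂ) (f t) * l₁ t‖ :=
            norm_integral_le_integral_norm _
        _ ≤ ∫ t in Set.Ioc a b, M * ‖l₁ t‖ := by
            refine setIntegral_mono_on hint1.norm
              (((hl₁.mono_set hsubI).norm).const_mul M) hmIoc fun t ht => ?_
            rw [norm_mul]
            refine mul_le_mul_of_nonneg_right ?_ (norm_nonneg _)
            simpa using hfM t (hsubI ht)
        _ = M * ∫ t in Set.Ioc a b, ‖l₁ t‖ := integral_const_mul M _
        _ ≤ M * ε := by
            refine mul_le_mul_of_nonneg_left ?_ hM0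
            rw [hε]
            exact setIntegral_mono_set hl₁.norm
              (Filter.Eventually.of_forall fun s => norm_nonneg _) hsubI.eventuallyLE
    have hp2 : ‖∫ t in Set.Ioc a b, (starRingEnd ℂ) (f t) * l₂ t‖ ≤ δ * τ := by
      have hcs := holder2 f l₂ (volume.restrict (Set.Ioc a b))
        (hfcI.aestronglyMeasurable hmIoc) ((hl₂.mono_set hsubI).aestronglyMeasurable)
        (hfsq.mono_set hsubI) (hl₂sq.mono_set hsubI)
      have hfle : Real.sqrt (∫ t in Set.Ioc a b, ‖f t‖ ^ 2) ≤ δ := by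
        rw [hδ]
        refine Real.sqrt_le_sqrt ?_
        exact setIntegral_mono_set hfsq
          (Filter.Eventually.of_forall fun s => sq_nonneg _) hsubI.eventuallyLE
      have hlle : Real.sqrt (∫ t in Set.Ioc a b, ‖l₂ t‖ ^ 2) ≤ τ := by
        rw [hτ]
        refine Real.sqrt_le_sqrt ?_
        exact setIntegral_mono_set hl₂sq
          (Filter.Eventually.of_forall fun s => sq_nonneg _) hsubI.eventuallyLE
      calc ‖∫ t in Set.Ioc a b, (starRingEnd ℂ) (f t) * l₂ t‖
          ≤ ∫ t in Set.Ioc a b, ‖(starRingEnd ℂ) (f t) * l₂ t‖ :=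
            norm_integral_le_integral_norm _
        _ = ∫ t in Set.Ioc a b, ‖f t‖ * ‖l₂ t‖ := by
            refine integral_congr_ae (Filter.Eventually.of_forall fun t => ?_)
            simp [norm_mul]
        _ ≤ Real.sqrt (∫ t in Set.Ioc a b, ‖f t‖ ^ 2)
              * Real.sqrt (∫ t in Set.Ioc a b, ‖l₂ t‖ ^ 2) := hcs
        _ ≤ δ * τ := mul_le_mul hfle hlle (Real.sqrt_nonneg _) hδ0
    calc |(∫ t in Set.Ioc a b, (starRingEnd ℂ) (f t) * g t).re|
        ≤ ‖∫ t in Set.Ioc a b, (starRingEnd ℂ) (f t) * g t‖ :=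
          Complex.abs_re_le_norm _
      _ = ‖∫ t in Set.Ioc a b, (starRingEnd ℂ) (f t) * g t‖ := rfl
      _ ≤ ‖∫ t in Set.Ioc a b, (starRingEnd ℂ) (f t) * l₁ t‖
            + ‖∫ t in Set.Ioc a b, (starRingEnd ℂ) (f t) * l₂ t‖ := by
          rw [hsplitI]; exact norm_add_le _ _
      _ ≤ M * ε + δ * τ := add_le_add hp1 hp2
  -- apply the key identity
  have hfy₀sq : Complex.normSq (f y₀) ≤ δ ^ 2 := by
    rw [← Complex.sq_norm]
    calc ‖f y₀‖ ^ 2 = ‖f y₀‖ ^ 2 := rfl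
      _ ≤ δ ^ 2 := pow_le_pow_left₀ (norm_nonneg _) hy₀le 2
  have hmain : Complex.normSq (f x) ≤ δ ^ 2 + 2 * (M * ε + δ * τ) := by
    rcases le_total y₀ x with hc | hc
    · have hss : Set.Ioc y₀ x ⊆ Set.Icc (0 : ℝ) 1 :=
        Set.Ioc_subset_Icc_self.trans (Set.Icc_subset_Icc hy₀.1 hx.2)
      have hid := key_identity g f hc (hg.mono_set hss)
        (fun t ht => hfy y₀ hy₀ t ⟨le_trans hy₀.1 ht.1, le_trans ht.2 hx.2⟩)
      have hb := hbound y₀ x hy₀ hx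
      have := abs_le.mp hb
      linarith [hid, hfy₀sq, this.2]
    · have hss : Set.Ioc x y₀ ⊆ Set.Icc (0 : ℝ) 1 :=
        Set.Ioc_subset_Icc_self.trans (Set.Icc_subset_Icc hx.1 hy₀.2)
      have hid := key_identity g f hc (hg.mono_set hss)
        (fun t ht => hfy x hx t ⟨le_trans hx.1 ht.1, le_trans ht.2 hy₀.2⟩)
      have hb := hbound x y₀ hx hy₀
      have := abs_le.mp hb
      linarith [hid, hfy₀sq, this.1]
  have hfin : ‖f x‖ ^ 2 ≤ δ ^ 2 + 2 * (δ * τ + ε * (τ + ε + δ)) := by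
    have h1 : ‖f x‖ ^ 2 = Complex.normSq (f x) := by
      rw [← Complex.sq_norm]
    rw [h1]
    have : δ ^ 2 + 2 * (M * ε + δ * τ) = δ ^ 2 + 2 * (δ * τ + ε * (τ + ε + δ)) := by
      rw [hMdef]; ring
    linarith [hmain]
  calc ‖f x‖ = Real.sqrt (‖f x‖ ^ 2) := (Real.sqrt_sq (norm_nonneg _)).symm
    _ ≤ Real.sqrt (δ ^ 2 + 2 * (δ * τ + ε * (τ + ε + δ))) := Real.sqrt_le_sqrt hfin
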